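/- Let u ∈ S_n, set v = û and w = û s(1,n) in S_{n+1}. Then for all 1 ≤ i < j ≤ n+1: (a) v ⋖ v t_{i,j} and v t_{i,j} ≤ w hold if and only if j−1 ∈ {1,…,n} and i−1 = (j−1)_L, i.e. {i−1, j−1} is an edge of the left tree of the triangulation ψ(u); (b) v ≤ w t_{i,j} and w t_{i,j} ⋖ w hold if and only if i ∈ {1,…,n} and j = i_R, i.e. {i,j} is an edge of the right tree of ψ(u). In other words, the atoms of the Bruhat interval [û, û s(1,n)] correspond to the edges of the left tree of ψ(u) and the coatoms to the edges of the right tree of ψ(u). -/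

import Mathlib

/-- `w : ℕ → ℕ` represents a permutation of `{1,…,m}` (extended by the identity
elsewhere); this encodes an element of the symmetric group `S_m`. -/
def IsPermOn (m : ℕ) (w : ℕ → ℕ) : Prop :=
  Set.BijOn w (Set.Icc 1 m) (Set.Icc 1 m) ∧ ∀ x, x ∉ Set.Icc 1 m → w x = x

/-- The increasing rearrangement of `(w(1), …, w(i))`. -/
def sortedInit (w : ℕ → ℕ) (i : ℕ) : List ℕ :=
  Multiset.sort ((Multiset.range i).map fun j => w (j + 1)) (· ≤ ·)

/-- The (strong) Bruhat order on `S_m`: `v ≤ w` iff for every `1 ≤ i ≤ m` the increasing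
rearrangement of `(v(1),…,v(i))` is componentwise `≤` that of `(w(1),…,w(i))`. -/
def bruhatLE (m : ℕ) (v w : ℕ → ℕ) : Prop :=
  ∀ i, 1 ≤ i → i ≤ m → List.Forall₂ (· ≤ ·) (sortedInit v i) (sortedInit w i)

/-- Strict Bruhat order. -/
def bruhatLT (m : ℕ) (v w : ℕ → ℕ) : Prop :=
  bruhatLE m v w ∧ v ≠ w

/-- `v ⋖ w` in the Bruhat order on `S_m`: `v < w` and no `z ∈ S_m` satisfies `v < z < w`. -/
def bruhatCovBy (m : ℕ) (v w : ℕ → ℕ) : Prop :=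
  bruhatLT m v w ∧ ∀ z, IsPermOn m z → ¬(bruhatLT m v z ∧ bruhatLT m z w)

/-- The transposition `t_{i,j}` interchanging `i` and `j`. -/
def transp (i j : ℕ) : ℕ → ℕ := fun x => if x = i then j else if x = j then i else x

/-- `û ∈ S_{n+1}` obtained from `u ∈ S_n` by putting `1` at the head:
`û(1) = 1` and `û(i) = u(i−1) + 1` for `2 ≤ i ≤ n+1`. -/
def uhat (u : ℕ → ℕ) : ℕ → ℕ := fun i => if i ≤ 1 then i else u (i - 1) + 1

/-- `s(1,n) = s₁ s₂ ⋯ s_n` as a permutation (product = composition of functions,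
`s_k = t_{k,k+1}`). -/
def sOneTo : ℕ → (ℕ → ℕ)
  | 0 => id
  | m + 1 => sOneTo m ∘ transp (m + 1) (m + 2)

namespace S12

/-- prefix multiset of a word -/
def pref (x : ℕ → ℕ) (p : ℕ) : Multiset ℕ := (Multiset.range p).map fun k => x (k + 1)

/-- number of entries ≥ c -/
def cntF (s : Multiset ℕ) (c : ℕ) : ℕ := Multiset.card (s.filter (c ≤ ·))

lemma card_pref (x : ℕ → ℕ) (p : ℕ) : Multiset.card (pref x p) = p := by
  simp [pref]

lemma pref_succ (x : ℕ → ℕ) (p : ℕ) : pref x (p + 1) = x (p + 1) ::ₘ pref x p := by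
  simp [pref, Multiset.range_succ]

lemma pref_congr {x y : ℕ → ℕ} {p : ℕ} (h : ∀ k, 1 ≤ k → k ≤ p → x k = y k) :
    pref x p = pref y p := by
  refine Multiset.map_congr rfl ?_
  intro k hk
  rw [Multiset.mem_range] at hk
  exact h (k + 1) (Nat.le_add_left 1 k) (by omega)

lemma cntF_cons (a : ℕ) (s : Multiset ℕ) (c : ℕ) :
    cntF (a ::ₘ s) c = (if c ≤ a then 1 else 0) + cntF s c := by
  by_cases h : c ≤ a <;> simp [cntF, Multiset.filter_cons, h] <;> omega

lemma cntF_le_card (s : Multiset ℕ) (c : ℕ) : cntF s c ≤ Multiset.card s := by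
  exact Multiset.card_le_card (Multiset.filter_le _ s)

lemma cntF_split (s : Multiset ℕ) (c : ℕ) :
    cntF s c = s.count c + cntF s (c + 1) := by
  induction s using Multiset.induction with
  | empty => simp [cntF]
  | cons a s ih =>
    rw [cntF_cons, cntF_cons, Multiset.count_cons, ih]
    split_ifs <;> omega

/-- equal counts for all thresholds gives equal multisets -/
lemma eq_of_cntF_eq {s t : Multiset ℕ} (h : ∀ c, cntF s c = cntF t c) : s = t := by
  ext a
  have h1 := cntF_split s a
  have h2 := cntF_split t a
  have := h a; have := h (a + 1)
  omega

/-- equal counts above b gives equal filtered multisets -/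
lemma filter_eq_of_cntF_eq {b : ℕ} {s t : Multiset ℕ}
    (h : ∀ c, b < c → cntF s c = cntF t c) :
    s.filter (b + 1 ≤ ·) = t.filter (b + 1 ≤ ·) := by
  have key : ∀ (s : Multiset ℕ) (c : ℕ), cntF (s.filter (b + 1 ≤ ·)) c = cntF s (max c (b + 1)) := by
    intro s c
    unfold cntF
    rw [Multiset.filter_filter]
    congr 1
    apply Multiset.filter_congr
    intro a _
    constructor
    · rintro ⟨h1, h2⟩; omega
    · intro h1; omega
  apply eq_of_cntF_eq
  intro c
  rw [key, key]
  exact h _ (by omega)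

lemma cons_cancel {a b : ℕ} {s : Multiset ℕ} (h : a ::ₘ s = b ::ₘ s) : a = b :=
  (Multiset.cons_inj_left s).mp h

lemma pair_cancel {a b c d : ℕ} {s : Multiset ℕ} (h : a ::ₘ b ::ₘ s = c ::ₘ d ::ₘ s) :
    (a = c ∧ b = d) ∨ (a = d ∧ b = c) := by
  have h' : ({a, b} : Multiset ℕ) + s = ({c, d} : Multiset ℕ) + s := by
    simpa [Multiset.insert_eq_cons, Multiset.cons_add] using h
  have hp : ({a, b} : Multiset ℕ) = {c, d} := by
    exact add_right_cancel h'
  have : a = c ∧ ({b} : Multiset ℕ) = {d} ∨ a ≠ c ∧ ∃ cs, ({b} : Multiset ℕ) = c ::ₘ cs ∧ ({d} : Multiset ℕ) = a ::ₘ cs := by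
    rw [← Multiset.cons_eq_cons]; exact hp
  rcases this with ⟨h1, h2⟩ | ⟨h1, cs, h2, h3⟩
  · left; exact ⟨h1, by simpa using h2⟩
  · right
    have hcs : cs = 0 := by
      have := congrArg Multiset.card h2
      simp at this
      exact this
    subst hcs
    simp at h2 h3
    exact ⟨by omega, by omega⟩


lemma cntF_coe (L : List ℕ) (c : ℕ) : cntF ↑L c = L.countP (fun v => decide (c ≤ v)) := by
  unfold cntF
  rw [← Multiset.countP_eq_card_filter, Multiset.coe_countP]

lemma forall2_sorted_iff_cnt {L1 L2 : List ℕ} (h1 : L1.Pairwise (· ≤ ·)) (h2 : L2.Pairwise (· ≤ ·))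
    (hlen : L1.length = L2.length) :
    List.Forall₂ (· ≤ ·) L1 L2 ↔ ∀ c, cntF ↑L1 c ≤ cntF ↑L2 c := by
  constructor
  · intro h c
    rw [cntF_coe, cntF_coe]
    clear h1 h2 hlen
    induction h with
    | nil => simp
    | @cons a b l1 l2 hab h ih =>
      rw [List.countP_cons, List.countP_cons]
      by_cases hca : c ≤ a <;> by_cases hcb : c ≤ b <;> simp [hca, hcb] <;> omega
  · intro hc
    rw [List.forall₂_iff_get]
    refine ⟨hlen, ?_⟩
    intro r hr1 hr2
    by_contra hlt
    push_neg at hlt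
    set c := L1.get ⟨r, hr1⟩ with hcdef
    have claim1 : L1.length - r ≤ L1.countP (fun v => decide (c ≤ v)) := by
      have hsplit : L1.countP (fun v => decide (c ≤ v)) =
          (L1.take r).countP (fun v => decide (c ≤ v)) +
          (L1.drop r).countP (fun v => decide (c ≤ v)) := by
        conv_lhs => rw [← List.take_append_drop r L1]
        rw [List.countP_append]
      have hdrop : (L1.drop r).countP (fun v => decide (c ≤ v)) = (L1.drop r).length := by
        rw [List.countP_eq_length]
        intro a ha
        rw [List.mem_iff_getElem] at ha
        obtain ⟨q, hq, rfl⟩ := ha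
        simp only [decide_eq_true_eq]
        have hrq : r + q < L1.length := by
          have := List.length_drop (i := r) (l := L1)
          omega
        rw [← List.getElem_drop' hrq]
        exact List.Pairwise.rel_get_of_le h1 (by simp)
      rw [hsplit, hdrop, List.length_drop]
      omega
    have claim2 : L2.countP (fun v => decide (c ≤ v)) + r + 1 ≤ L2.length := by
      have hsplit : L2.countP (fun v => decide (c ≤ v)) =
          (L2.take (r+1)).countP (fun v => decide (c ≤ v)) +
          (L2.drop (r+1)).countP (fun v => decide (c ≤ v)) := by
        conv_lhs => rw [← List.take_append_drop (r+1) L2]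
        rw [List.countP_append]
      have htake : (L2.take (r+1)).countP (fun v => decide (c ≤ v)) = 0 := by
        rw [List.countP_eq_zero]
        intro a ha
        rw [List.mem_iff_getElem] at ha
        obtain ⟨q, hq, rfl⟩ := ha
        simp only [decide_eq_true_eq]
        have hq2 : q < L2.length := by
          have := List.length_take (i := r+1) (l := L2)
          omega
        rw [List.getElem_take]
        have hqr : L2[q] ≤ L2[r] := List.Pairwise.rel_get_of_le h2 (by
          have := List.length_take (i := r+1) (l := L2)
          simp
          omega)
        have : L2.get ⟨r, hr2⟩ < c := hlt
        simp only [List.get_eq_getElem] at this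
        omega
      have hdrop : (L2.drop (r+1)).countP (fun v => decide (c ≤ v)) ≤ L2.length - (r+1) := by
        calc (L2.drop (r+1)).countP (fun v => decide (c ≤ v)) ≤ (L2.drop (r+1)).length :=
              List.countP_le_length
          _ = L2.length - (r+1) := List.length_drop
      omega
    have h3 := hc c
    rw [cntF_coe, cntF_coe] at h3
    omega

lemma forall2_sort_iff {s t : Multiset ℕ} (hcard : Multiset.card s = Multiset.card t) :
    List.Forall₂ (· ≤ ·) (Multiset.sort s (· ≤ ·)) (Multiset.sort t (· ≤ ·)) ↔
      ∀ c, cntF s c ≤ cntF t c := by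
  have h := forall2_sorted_iff_cnt (Multiset.pairwise_sort s (· ≤ ·)) (Multiset.pairwise_sort t (· ≤ ·))
    (by rw [Multiset.length_sort, Multiset.length_sort, hcard])
  rwa [Multiset.sort_eq, Multiset.sort_eq] at h

lemma sortedInit_eq (x : ℕ → ℕ) (p : ℕ) : sortedInit x p = Multiset.sort (pref x p) (· ≤ ·) := rfl

lemma bruhatLE_iff {m : ℕ} {x y : ℕ → ℕ} :
    bruhatLE m x y ↔ ∀ p, 1 ≤ p → p ≤ m → ∀ c, cntF (pref x p) c ≤ cntF (pref y p) c := by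
  constructor
  · intro h p h1 h2 c
    have := h p h1 h2
    rw [sortedInit_eq, sortedInit_eq] at this
    exact (forall2_sort_iff (by rw [card_pref, card_pref])).mp this c
  · intro h p h1 h2
    rw [sortedInit_eq, sortedInit_eq]
    exact (forall2_sort_iff (by rw [card_pref, card_pref])).mpr (h p h1 h2)


lemma transp_left (i j : ℕ) : transp i j i = j := by simp [transp]

lemma transp_right (i j : ℕ) (hij : i ≠ j) : transp i j j = i := by simp [transp, hij.symm]

lemma transp_other {i j k : ℕ} (h1 : k ≠ i) (h2 : k ≠ j) : transp i j k = k := by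
  simp [transp, h1, h2]

lemma transp_invol (i j x : ℕ) : transp i j (transp i j x) = x := by
  unfold transp
  split_ifs <;> omega

lemma pref_eq_single (x : ℕ → ℕ) {i p : ℕ} (h1 : 1 ≤ i) (hip : i ≤ p) :
    ∃ M, pref x p = x i ::ₘ M ∧
      ∀ y : ℕ → ℕ, (∀ k, 1 ≤ k → k ≤ p → k ≠ i → y k = x k) → pref y p = y i ::ₘ M := by
  have hmem : i - 1 ∈ Multiset.range p := by rw [Multiset.mem_range]; omega
  set R := (Multiset.range p).erase (i - 1) with hR
  have hrange : Multiset.range p = (i - 1) ::ₘ R := (Multiset.cons_erase hmem).symm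
  have hmemR : ∀ k ∈ R, k ≠ i - 1 ∧ k < p := by
    intro k hk
    rw [hR, (Multiset.nodup_range p).mem_erase_iff, Multiset.mem_range] at hk
    exact hk
  refine ⟨R.map (fun k => x (k + 1)), ?_, ?_⟩
  · rw [pref, hrange, Multiset.map_cons]
    congr 1
    congr 1
    omega
  · intro y hy
    rw [pref, hrange, Multiset.map_cons]
    have hyi : y (i - 1 + 1) = y i := by congr 1; omega
    rw [hyi]
    congr 1
    refine Multiset.map_congr rfl ?_
    intro k hk
    obtain ⟨hk1, hk2⟩ := hmemR k hk
    exact hy (k + 1) (by omega) (by omega) (by omega)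

lemma pref_eq_double (x : ℕ → ℕ) {i j p : ℕ} (h1 : 1 ≤ i) (hij : i < j) (hjp : j ≤ p) :
    ∃ M, pref x p = x i ::ₘ x j ::ₘ M ∧
      ∀ y : ℕ → ℕ, (∀ k, 1 ≤ k → k ≤ p → k ≠ i → k ≠ j → y k = x k) →
        pref y p = y i ::ₘ y j ::ₘ M := by
  have hmi : i - 1 ∈ Multiset.range p := by rw [Multiset.mem_range]; omega
  have hnd := Multiset.nodup_range p
  have hmj : j - 1 ∈ (Multiset.range p).erase (i - 1) := by
    rw [hnd.mem_erase_iff, Multiset.mem_range]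
    omega
  set R := ((Multiset.range p).erase (i - 1)).erase (j - 1) with hR
  have hrange : Multiset.range p = (i - 1) ::ₘ (j - 1) ::ₘ R := by
    rw [hR, Multiset.cons_erase hmj, Multiset.cons_erase hmi]
  have hmemR : ∀ k ∈ R, k ≠ i - 1 ∧ k ≠ j - 1 ∧ k < p := by
    intro k hk
    rw [hR, (hnd.erase _).mem_erase_iff, hnd.mem_erase_iff, Multiset.mem_range] at hk
    tauto
  refine ⟨R.map (fun k => x (k + 1)), ?_, ?_⟩
  · rw [pref, hrange, Multiset.map_cons, Multiset.map_cons]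
    have e1 : x (i - 1 + 1) = x i := by congr 1; omega
    have e2 : x (j - 1 + 1) = x j := by congr 1; omega
    rw [e1, e2]
  · intro y hy
    rw [pref, hrange, Multiset.map_cons, Multiset.map_cons]
    have e1 : y (i - 1 + 1) = y i := by congr 1; omega
    have e2 : y (j - 1 + 1) = y j := by congr 1; omega
    rw [e1, e2]
    congr 1
    congr 1
    refine Multiset.map_congr rfl ?_
    intro k hk
    obtain ⟨hk1, hk2, hk3⟩ := hmemR k hk
    exact hy (k + 1) (by omega) (by omega) (by omega) (by omega)

lemma pref_transp_mid (x : ℕ → ℕ) {i j p : ℕ} (h1 : 1 ≤ i) (hij : i < j) (hip : i ≤ p)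
    (hpj : p < j) :
    ∃ M, pref x p = x i ::ₘ M ∧ pref (x ∘ transp i j) p = x j ::ₘ M := by
  obtain ⟨M, hM1, hM2⟩ := pref_eq_single x h1 hip
  refine ⟨M, hM1, ?_⟩
  have := hM2 (x ∘ transp i j) ?_
  · rw [this]
    simp [Function.comp, transp_left]
  · intro k hk1 hk2 hk3
    simp only [Function.comp]
    rw [transp_other hk3 (by omega)]

lemma pref_transp_out (x : ℕ → ℕ) {i j p : ℕ} (h1 : 1 ≤ i) (hij : i < j)
    (hp : p < i ∨ j ≤ p) : pref (x ∘ transp i j) p = pref x p := by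
  rcases hp with hp | hp
  · apply pref_congr
    intro k hk1 hk2
    simp only [Function.comp]
    rw [transp_other (by omega) (by omega)]
  · obtain ⟨M, hM1, hM2⟩ := pref_eq_double x h1 hij hp
    have := hM2 (x ∘ transp i j) ?_
    · rw [this, hM1]
      simp only [Function.comp, transp_left, transp_right i j (by omega : i ≠ j)]
      exact Multiset.cons_swap _ _ _
    · intro k hk1 hk2 hk3 hk4
      simp only [Function.comp]
      rw [transp_other hk3 hk4]


lemma cover_lemma {m i j : ℕ} {x z : ℕ → ℕ} (h1 : 1 ≤ i) (hij : i < j) (hjm : j ≤ m)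
    (hmid : ∀ k, i < k → k < j → x j < x k)
    (hxid : ∀ a, a ∉ Set.Icc 1 m → x a = a)
    (hzid : ∀ a, a ∉ Set.Icc 1 m → z a = a)
    (hxz : bruhatLE m x z) (hzy : bruhatLE m z (x ∘ transp i j)) :
    z = x ∨ z = x ∘ transp i j := by
  have hxz' := bruhatLE_iff.mp hxz
  have hzy' := bruhatLE_iff.mp hzy
  -- prefix multisets agree outside the window
  have E_out : ∀ p, p ≤ m → (p < i ∨ j ≤ p) → pref z p = pref x p := by
    intro p hpm hp
    rcases Nat.eq_zero_or_pos p with rfl | hp1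
    · simp [pref]
    apply eq_of_cntF_eq
    intro c
    have e1 := hxz' p hp1 hpm c
    have e2 := hzy' p hp1 hpm c
    rw [pref_transp_out x h1 hij hp] at e2
    omega
  -- filtered prefix multisets agree inside the window
  have E_mid : ∀ p, i ≤ p → p < j →
      (pref z p).filter (x j + 1 ≤ ·) = (pref x p).filter (x j + 1 ≤ ·) := by
    intro p hip hpj
    apply filter_eq_of_cntF_eq
    intro c hc
    obtain ⟨M, hM1, hM2⟩ := pref_transp_mid x h1 hij hip hpj
    have e1 := hxz' p (by omega) (by omega) c
    have e2 := hzy' p (by omega) (by omega) c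
    rw [hM2, cntF_cons] at e2
    rw [hM1, cntF_cons] at e1 ⊢
    have hcb : ¬ (c ≤ x j) := by omega
    rw [if_neg hcb] at e2
    omega
  have za : ∀ k, 1 ≤ k → k < i → z k = x k := by
    intro k hk1 hki
    obtain ⟨k', rfl⟩ : ∃ k', k = k' + 1 := ⟨k - 1, by omega⟩
    have e1 := E_out (k' + 1) (by omega) (by left; omega)
    have e2 := E_out k' (by omega) (by left; omega)
    rw [pref_succ, pref_succ, e2] at e1
    exact cons_cancel e1
  have zc : ∀ k, j < k → k ≤ m → z k = x k := by
    intro k hjk hkm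
    obtain ⟨k', rfl⟩ : ∃ k', k = k' + 1 := ⟨k - 1, by omega⟩
    have e1 := E_out (k' + 1) (by omega) (by right; omega)
    have e2 := E_out k' (by omega) (by right; omega)
    rw [pref_succ, pref_succ, e2] at e1
    exact cons_cancel e1
  have zmid : ∀ k, i < k → k < j → z k = x k := by
    intro k hik hkj
    obtain ⟨k', rfl⟩ : ∃ k', k = k' + 1 := ⟨k - 1, by omega⟩
    have e1 := E_mid (k' + 1) (by omega) (by omega)
    have e2 := E_mid k' (by omega) (by omega)
    rw [pref_succ, pref_succ, Multiset.filter_cons, Multiset.filter_cons, e2] at e1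
    have hxk : x j + 1 ≤ x (k' + 1) := hmid (k' + 1) hik hkj
    rw [if_pos hxk] at e1
    have := add_right_cancel e1
    split_ifs at this with hzk
    · exact Multiset.singleton_inj.mp this
    · exfalso
      have := congrArg Multiset.card this
      simp at this
  -- the window endpoints
  have Ej := E_out j hjm (by right; omega)
  obtain ⟨M, hM1, hM2⟩ := pref_eq_double x h1 hij (le_refl j)
  have hzj : pref z j = z i ::ₘ z j ::ₘ M := by
    apply hM2
    intro k hk1 hk2 hk3 hk4
    rcases Nat.lt_or_ge k i with h | h
    · exact za k hk1 h
    · exact zmid k (by omega) (by omega)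
  rw [hzj, hM1] at Ej
  rcases pair_cancel Ej with ⟨e1, e2⟩ | ⟨e1, e2⟩
  · left
    funext a
    by_cases ha : a ∈ Set.Icc 1 m
    · obtain ⟨ha1, ha2⟩ := ha
      rcases Nat.lt_or_ge a i with h | h
      · exact za a ha1 h
      rcases Nat.eq_or_lt_of_le h with h' | h'
      · rw [← h']; exact e1
      rcases Nat.lt_or_ge a j with h2 | h2
      · exact zmid a h' h2
      rcases Nat.eq_or_lt_of_le h2 with h2' | h2'
      · rw [← h2']; exact e2
      · exact zc a h2' ha2
    · rw [hzid a ha, hxid a ha]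
  · right
    funext a
    simp only [Function.comp]
    by_cases ha : a ∈ Set.Icc 1 m
    · obtain ⟨ha1, ha2⟩ := ha
      by_cases hai : a = i
      · rw [hai, transp_left]; exact e1
      by_cases haj : a = j
      · rw [haj, transp_right i j (by omega)]; exact e2
      rw [transp_other hai haj]
      rcases Nat.lt_or_ge a i with h | h
      · exact za a ha1 h
      rcases Nat.lt_or_ge a j with h2 | h2
      · exact zmid a (by omega) h2
      · exact zc a (by omega) ha2
    · have hai : a ≠ i := by
        intro h; apply ha; rw [h]; exact Set.mem_Icc.mpr ⟨h1, by omega⟩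
      have haj : a ≠ j := by
        intro h; apply ha; rw [h]; exact Set.mem_Icc.mpr ⟨by omega, hjm⟩
      rw [transp_other hai haj, hzid a ha, hxid a ha]


lemma range_succ' (p : ℕ) : Multiset.range (p + 1) = 0 ::ₘ (Multiset.range p).map Nat.succ := by
  have : Multiset.range (p + 1) = ((List.range (p + 1) : List ℕ) : Multiset ℕ) := rfl
  rw [this, List.range_succ_eq_map]
  rfl

lemma sOneTo_eval (n x : ℕ) :
    sOneTo n x = if 1 ≤ x ∧ x ≤ n then x + 1 else if x = n + 1 then 1 else x := by
  induction n generalizing x with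
  | zero =>
    show id x = _
    simp only [id]
    split_ifs <;> omega
  | succ m ih =>
    show sOneTo m (transp (m + 1) (m + 2) x) = _
    by_cases h1 : x = m + 1
    · subst h1
      rw [transp_left, ih]
      split_ifs <;> omega
    by_cases h2 : x = m + 2
    · subst h2
      rw [transp_right _ _ (by omega), ih]
      split_ifs <;> omega
    · rw [transp_other h1 h2, ih]
      split_ifs <;> omega

lemma uhat_eval_low (u : ℕ → ℕ) {a : ℕ} (h : a ≤ 1) : uhat u a = a := by simp [uhat, h]

lemma uhat_eval (u : ℕ → ℕ) {a : ℕ} (h : 2 ≤ a) : uhat u a = u (a - 1) + 1 := by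
  simp [uhat]; omega


variable {n : ℕ} {u : ℕ → ℕ}

lemma u_mem (hu : IsPermOn n u) {k : ℕ} (h1 : 1 ≤ k) (h2 : k ≤ n) : 1 ≤ u k ∧ u k ≤ n := by
  have := hu.1.mapsTo (Set.mem_Icc.mpr ⟨h1, h2⟩)
  exact Set.mem_Icc.mp this

lemma u_inj (hu : IsPermOn n u) {a b : ℕ} (ha1 : 1 ≤ a) (ha2 : a ≤ n) (hb1 : 1 ≤ b) (hb2 : b ≤ n)
    (h : u a = u b) : a = b :=
  hu.1.injOn (Set.mem_Icc.mpr ⟨ha1, ha2⟩) (Set.mem_Icc.mpr ⟨hb1, hb2⟩) h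

lemma w_eval {p : ℕ} (h1 : 1 ≤ p) (h2 : p ≤ n) : (uhat u ∘ sOneTo n) p = u p + 1 := by
  simp only [Function.comp]
  rw [sOneTo_eval, if_pos ⟨h1, h2⟩, uhat_eval u (by omega)]
  norm_num

lemma w_last : (uhat u ∘ sOneTo n) (n + 1) = 1 := by
  simp only [Function.comp]
  rw [sOneTo_eval]
  have h : ¬ (1 ≤ n + 1 ∧ n + 1 ≤ n) := by omega
  rw [if_neg h, if_pos rfl]
  exact uhat_eval_low u le_rfl

lemma v_id_out (hu : IsPermOn n u) : ∀ a, a ∉ Set.Icc 1 (n + 1) → uhat u a = a := by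
  intro a ha
  rw [Set.mem_Icc] at ha
  push_neg at ha
  rcases Nat.lt_or_ge a 1 with h | h
  · exact uhat_eval_low u (by omega)
  · have h2 : n + 1 < a := ha h
    rw [uhat_eval u (by omega), hu.2 (a - 1) (by rw [Set.mem_Icc]; omega)]
    omega

lemma w_id_out (hu : IsPermOn n u) : ∀ a, a ∉ Set.Icc 1 (n + 1) → (uhat u ∘ sOneTo n) a = a := by
  intro a ha
  have ha' := ha
  rw [Set.mem_Icc] at ha'
  push_neg at ha'
  have hs : sOneTo n a = a := by
    rw [sOneTo_eval]
    rcases Nat.lt_or_ge a 1 with h | h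
    · have h' : ¬ (1 ≤ a ∧ a ≤ n) := by omega
      rw [if_neg h', if_neg (by omega)]
    · have h2 : n + 1 < a := ha' h
      rw [if_neg (by omega), if_neg (by omega)]
  show uhat u (sOneTo n a) = a
  rw [hs]
  exact v_id_out hu a ha

lemma pref_vw {p : ℕ} (hp : p ≤ n) :
    pref (uhat u) (p + 1) = 1 ::ₘ pref (uhat u ∘ sOneTo n) p := by
  rw [pref, pref, range_succ', Multiset.map_cons, Multiset.map_map]
  rw [uhat_eval_low u le_rfl]
  congr 1
  refine Multiset.map_congr rfl ?_
  intro k hk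
  rw [Multiset.mem_range] at hk
  show uhat u (k.succ + 1) = (uhat u ∘ sOneTo n) (k + 1)
  rw [w_eval (Nat.le_add_left 1 k) (show k + 1 ≤ n by omega), uhat_eval u (by omega)]
  norm_num

lemma cnt_vw {p : ℕ} (h1 : 1 ≤ p) (h2 : p ≤ n) (c : ℕ) :
    cntF (pref (uhat u) p) c + (if c ≤ (uhat u ∘ sOneTo n) p then 1 else 0) =
      cntF (pref (uhat u ∘ sOneTo n) p) c + (if c ≤ 1 then 1 else 0) := by
  obtain ⟨p', rfl⟩ : ∃ p', p = p' + 1 := ⟨p - 1, by omega⟩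
  rw [pref_vw (show p' ≤ n by omega), pref_succ, cntF_cons, cntF_cons]
  omega

lemma pref_v_top : pref (uhat u) (n + 1) = pref (uhat u ∘ sOneTo n) (n + 1) := by
  rw [pref_vw le_rfl, pref_succ, w_last]

lemma v_le_w : bruhatLE (n + 1) (uhat u) (uhat u ∘ sOneTo n) := by
  rw [bruhatLE_iff]
  intro p hp1 hp2 c
  rcases Nat.lt_or_ge p (n + 1) with h | h
  · have hc := cnt_vw (u := u) hp1 (show p ≤ n by omega) c
    have hw : 1 ≤ (uhat u ∘ sOneTo n) p := by
      rw [w_eval hp1 (show p ≤ n by omega)]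
      omega
    split_ifs at hc <;> omega
  · have hp : p = n + 1 := by omega
    subst hp
    exact le_of_eq (by rw [pref_v_top])




lemma v_ne (hu : IsPermOn n u) {a b : ℕ} (ha1 : 1 ≤ a) (ha2 : a ≤ n + 1) (hb1 : 1 ≤ b)
    (hb2 : b ≤ n + 1) (hab : a ≠ b) : uhat u a ≠ uhat u b := by
  intro h
  apply hab
  rcases Nat.lt_or_ge a 2 with h1 | h1 <;> rcases Nat.lt_or_ge b 2 with h2 | h2
  · omega
  · exfalso
    rw [uhat_eval_low u (by omega), uhat_eval u h2] at h
    obtain ⟨hb, _⟩ := u_mem hu (show 1 ≤ b - 1 by omega) (show b - 1 ≤ n by omega)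
    omega
  · exfalso
    rw [uhat_eval u h1, uhat_eval_low u (by omega)] at h
    obtain ⟨hb, _⟩ := u_mem hu (show 1 ≤ a - 1 by omega) (show a - 1 ≤ n by omega)
    omega
  · rw [uhat_eval u h1, uhat_eval u h2] at h
    have := u_inj hu (show 1 ≤ a - 1 by omega) (show a - 1 ≤ n by omega)
      (show 1 ≤ b - 1 by omega) (show b - 1 ≤ n by omega) (by omega)
    omega

lemma w_ne (hu : IsPermOn n u) {a b : ℕ} (ha1 : 1 ≤ a) (ha2 : a ≤ n + 1) (hb1 : 1 ≤ b)
    (hb2 : b ≤ n + 1) (hab : a ≠ b) :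
    (uhat u ∘ sOneTo n) a ≠ (uhat u ∘ sOneTo n) b := by
  intro h
  apply hab
  rcases Nat.lt_or_ge a (n + 1) with h1 | h1 <;> rcases Nat.lt_or_ge b (n + 1) with h2 | h2
  · rw [w_eval ha1 (by omega), w_eval hb1 (by omega)] at h
    exact u_inj hu ha1 (by omega) hb1 (by omega) (by omega)
  · have hb' : b = n + 1 := by omega
    rw [w_eval ha1 (by omega), hb', w_last] at h
    obtain ⟨h3, _⟩ := u_mem hu ha1 (show a ≤ n by omega)
    omega
  · have ha' : a = n + 1 := by omega
    rw [w_eval hb1 (by omega), ha', w_last] at h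
    obtain ⟨h3, _⟩ := u_mem hu hb1 (show b ≤ n by omega)
    omega
  · omega

lemma w_ge1 (hu : IsPermOn n u) {a : ℕ} (h1 : 1 ≤ a) (h2 : a ≤ n + 1) :
    1 ≤ (uhat u ∘ sOneTo n) a := by
  rcases Nat.lt_or_ge a (n + 1) with h | h
  · rw [w_eval h1 (by omega)]
    obtain ⟨h3, _⟩ := u_mem hu h1 (show a ≤ n by omega)
    omega
  · have ha : a = n + 1 := by omega
    rw [ha, w_last]

end S12

open S12

/-- Atoms and coatoms of the Bruhat interval `[û, û·s(1,n)]` in `S_{n+1}` correspond to the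
edges of the left tree, resp. the right tree, of the triangulation `ψ(u)`: with the
convention `u(0) = u(n+1) = 0` one sets `k_L = max{a : 0 ≤ a < k, u(a) < u(k)}` and
`k_R = min{b : k < b ≤ n+1, u(b) < u(k)}`; then for `1 ≤ i < j ≤ n+1`, `v ⋖ v·t_{i,j} ≤ w`
iff `j−1 ∈ {1,…,n}` and `i−1 = (j−1)_L`, and `v ≤ w·t_{i,j} ⋖ w` iff `i ∈ {1,…,n}` and
`j = i_R`, where `v = û`, `w = û·s(1,n)`. -/
theorem stmt12 (n : ℕ) (hn : 1 ≤ n) (u : ℕ → ℕ) (hu : IsPermOn n u)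
    (kL kR : ℕ → ℕ)
    (hkL : ∀ k, 1 ≤ k → k ≤ n → kL k < k ∧ (kL k = 0 ∨ u (kL k) < u k) ∧
      ∀ a, kL k < a → a < k → ¬(a = 0 ∨ u a < u k))
    (hkR : ∀ k, 1 ≤ k → k ≤ n → k < kR k ∧ kR k ≤ n + 1 ∧
      (kR k = n + 1 ∨ u (kR k) < u k) ∧
      ∀ b, k < b → b < kR k → ¬(b = n + 1 ∨ u b < u k)) :
    ∀ i j, 1 ≤ i → i < j → j ≤ n + 1 →
      ((bruhatCovBy (n + 1) (uhat u) (uhat u ∘ transp i j) ∧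
          bruhatLE (n + 1) (uhat u ∘ transp i j) (uhat u ∘ sOneTo n)) ↔
        (1 ≤ j - 1 ∧ j - 1 ≤ n ∧ i - 1 = kL (j - 1))) ∧
      ((bruhatLE (n + 1) (uhat u) (uhat u ∘ sOneTo n ∘ transp i j) ∧
          bruhatCovBy (n + 1) (uhat u ∘ sOneTo n ∘ transp i j) (uhat u ∘ sOneTo n)) ↔
        (1 ≤ i ∧ i ≤ n ∧ j = kR i)) := by
  intro i j hi hij hjm
  have hmu : ∀ k, 1 ≤ k → k ≤ n → 1 ≤ u k ∧ u k ≤ n := fun k h1 h2 => u_mem hu h1 h2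
  have hin : i ≤ n := by omega
  constructor
  · -- part (a)
    have hj2' : 2 ≤ j := by omega
    have hvj : uhat u j = u (j - 1) + 1 := uhat_eval u hj2'
    obtain ⟨huj1, huj2⟩ := hmu (j - 1) (by omega) (by omega)
    have hvi1 : 1 ≤ uhat u i := by unfold uhat; split_ifs <;> omega
    constructor
    · rintro ⟨⟨⟨hle, hne⟩, hcov⟩, hvtw⟩
      -- v i < v j
      have hile : uhat u i ≤ uhat u j := by
        have hva := bruhatLE_iff.mp hle i hi (by omega) (uhat u i)
        obtain ⟨M, hM1, hM2⟩ := pref_transp_mid (uhat u) hi hij le_rfl hij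
        rw [hM1, hM2, cntF_cons, cntF_cons] at hva
        split_ifs at hva <;> omega
      have hvij : uhat u i < uhat u j :=
        lt_of_le_of_ne hile (v_ne hu hi (by omega) (by omega) hjm (by omega))
      have h2j : 2 ≤ uhat u j := by omega
      -- u p ≥ u (j - 1) on the window
      have hup : ∀ p, i ≤ p → p ≤ j - 1 → u (j - 1) ≤ u p := by
        intro p hp1 hp2
        have hcw := bruhatLE_iff.mp hvtw p (by omega) (by omega) (uhat u j)
        obtain ⟨M, hM1, hM2⟩ := pref_transp_mid (uhat u) hi hij hp1 (by omega)
        have hcv := cnt_vw (u := u) (show 1 ≤ p by omega) (show p ≤ n by omega) (uhat u j)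
        rw [hM2, cntF_cons] at hcw
        rw [hM1, cntF_cons] at hcv
        have hwp : (uhat u ∘ sOneTo n) p = u p + 1 :=
          w_eval (show 1 ≤ p by omega) (show p ≤ n by omega)
        rw [hwp] at hcv
        split_ifs at hcw hcv <;> omega
      refine ⟨by omega, by omega, ?_⟩
      obtain ⟨hL1, hL2, hL3⟩ := hkL (j - 1) (by omega) (by omega)
      by_contra hKL
      rcases Nat.lt_or_ge (i - 1) (kL (j - 1)) with h | h
      · have hK := hup (kL (j - 1)) (by omega) (by omega)
        rcases hL2 with h0 | h0 <;> omega
      · have hlt : kL (j - 1) < i - 1 := by omega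
        have h3 := hL3 (i - 1) (by omega) (by omega)
        have hi2 : 2 ≤ i := by omega
        have hvi : uhat u i = u (i - 1) + 1 := uhat_eval u hi2
        omega
    · rintro ⟨hj1, hj2, hKL⟩
      obtain ⟨hL1, hL2, hL3⟩ := hkL (j - 1) hj1 hj2
      have hup : ∀ p, i ≤ p → p ≤ j - 1 → u (j - 1) ≤ u p := by
        intro p hp1 hp2
        rcases Nat.eq_or_lt_of_le hp2 with h | h
        · rw [h]
        · have h3 := hL3 p (by omega) (by omega)
          omega
      have hvij : uhat u i < uhat u j := by
        rcases Nat.lt_or_ge i 2 with h | h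
        · have h1 : i = 1 := by omega
          rw [h1, uhat_eval_low u le_rfl, hvj]
          omega
        · rw [uhat_eval u h, hvj]
          have hiu : u (i - 1) < u (j - 1) := by
            rcases hL2 with h0 | h0
            · omega
            · rw [hKL]; exact h0
          omega
      have hmid : ∀ k, i < k → k < j → uhat u j < uhat u k := by
        intro k hik hkj
        have hk2 : 2 ≤ k := by omega
        rw [uhat_eval u hk2, hvj]
        have h3 := hL3 (k - 1) (by omega) (by omega)
        have hne2 : u (k - 1) ≠ u (j - 1) := fun h => by
          have := u_inj hu (show 1 ≤ k - 1 by omega) (show k - 1 ≤ n by omega)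
            (show 1 ≤ j - 1 by omega) (show j - 1 ≤ n by omega) h
          omega
        omega
      have hLT : bruhatLT (n + 1) (uhat u) (uhat u ∘ transp i j) := by
        constructor
        · rw [bruhatLE_iff]
          intro p hp1 hp2 c
          rcases Nat.lt_or_ge p i with h | h
          · rw [pref_transp_out (uhat u) hi hij (Or.inl h)]
          · rcases Nat.lt_or_ge p j with h2 | h2
            · obtain ⟨M, hM1, hM2⟩ := pref_transp_mid (uhat u) hi hij h h2
              rw [hM1, hM2, cntF_cons, cntF_cons]
              split_ifs <;> omega
            · rw [pref_transp_out (uhat u) hi hij (Or.inr h2)]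
        · intro hfun
          have h1 := congrFun hfun i
          simp only [Function.comp] at h1
          rw [transp_left] at h1
          omega
      have hcover : bruhatCovBy (n + 1) (uhat u) (uhat u ∘ transp i j) := by
        refine ⟨hLT, ?_⟩
        rintro z hz ⟨⟨hxz_le, hxz_ne⟩, ⟨hzy_le, hzy_ne⟩⟩
        rcases cover_lemma hi hij hjm hmid (v_id_out hu) hz.2 hxz_le hzy_le with h | h
        · exact hxz_ne h.symm
        · exact hzy_ne h
      have hLE2 : bruhatLE (n + 1) (uhat u ∘ transp i j) (uhat u ∘ sOneTo n) := by
        rw [bruhatLE_iff]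
        intro p hp1 hp2 c
        have hvw := bruhatLE_iff.mp (v_le_w (n := n) (u := u)) p hp1 hp2 c
        rcases Nat.lt_or_ge p i with h | h
        · rw [pref_transp_out (uhat u) hi hij (Or.inl h)]
          exact hvw
        · rcases Nat.lt_or_ge p j with h2 | h2
          · obtain ⟨M, hM1, hM2⟩ := pref_transp_mid (uhat u) hi hij h h2
            have hcv := cnt_vw (u := u) (show 1 ≤ p by omega) (show p ≤ n by omega) c
            rw [hM1, cntF_cons] at hcv
            rw [hM2, cntF_cons]
            have hwp : uhat u j ≤ (uhat u ∘ sOneTo n) p := by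
              rw [w_eval (show 1 ≤ p by omega) (show p ≤ n by omega), hvj]
              have := hup p h (by omega)
              omega
            have hwp1 : 1 ≤ (uhat u ∘ sOneTo n) p :=
              w_ge1 hu (show 1 ≤ p by omega) (show p ≤ n + 1 by omega)
            split_ifs at hcv ⊢ <;> omega
          · rw [pref_transp_out (uhat u) hi hij (Or.inr h2)]
            exact hvw
      exact ⟨hcover, hLE2⟩
  · -- part (b)
    have hWi : (uhat u ∘ sOneTo n) i = u i + 1 := w_eval hi hin
    obtain ⟨hui1, hui2⟩ := hmu i hi hin
    have hc2 : 2 ≤ (uhat u ∘ sOneTo n) i := by omega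
    have hWj1 : 1 ≤ (uhat u ∘ sOneTo n) j := w_ge1 hu (by omega) hjm
    constructor
    · rintro ⟨hvwt0, ⟨⟨hle0, hne0⟩, hcov⟩⟩
      have hvwt : bruhatLE (n + 1) (uhat u) ((uhat u ∘ sOneTo n) ∘ transp i j) := hvwt0
      have hle : bruhatLE (n + 1) ((uhat u ∘ sOneTo n) ∘ transp i j) (uhat u ∘ sOneTo n) := hle0
      -- W j < W i
      have hjle : (uhat u ∘ sOneTo n) j ≤ (uhat u ∘ sOneTo n) i := by
        have hva := bruhatLE_iff.mp hle i hi (by omega) ((uhat u ∘ sOneTo n) j)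
        obtain ⟨M, hM1, hM2⟩ := pref_transp_mid (uhat u ∘ sOneTo n) hi hij le_rfl hij
        rw [hM1, hM2, cntF_cons, cntF_cons] at hva
        split_ifs at hva <;> omega
      have hWji : (uhat u ∘ sOneTo n) j < (uhat u ∘ sOneTo n) i :=
        lt_of_le_of_ne hjle (w_ne hu (by omega) hjm hi (by omega) (by omega))
      -- W p ≥ W i on the window
      have hup : ∀ p, i ≤ p → p < j → (uhat u ∘ sOneTo n) i ≤ (uhat u ∘ sOneTo n) p := by
        intro p hp1 hp2
        have hcw := bruhatLE_iff.mp hvwt p (by omega) (by omega) ((uhat u ∘ sOneTo n) i)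
        obtain ⟨M, hM1, hM2⟩ := pref_transp_mid (uhat u ∘ sOneTo n) hi hij hp1 hp2
        have hcv := cnt_vw (u := u) (show 1 ≤ p by omega) (show p ≤ n by omega)
          ((uhat u ∘ sOneTo n) i)
        rw [hM2, cntF_cons] at hcw
        rw [hM1, cntF_cons] at hcv
        split_ifs at hcw hcv <;> omega
      obtain ⟨hR1, hR2, hR3, hR4⟩ := hkR i hi hin
      refine ⟨hi, hin, ?_⟩
      by_contra hne'
      rcases Nat.lt_or_ge j (kR i) with h | h
      · have h4 := hR4 j hij h
        have hjn : j ≤ n := by omega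
        have hWj : (uhat u ∘ sOneTo n) j = u j + 1 := w_eval (by omega) hjn
        omega
      · have hlt : kR i < j := by omega
        have hK := hup (kR i) (by omega) hlt
        have hKn : kR i ≤ n := by omega
        have hWK : (uhat u ∘ sOneTo n) (kR i) = u (kR i) + 1 := w_eval (by omega) hKn
        rcases hR3 with h0 | h0 <;> omega
    · rintro ⟨hi1, hin1, hKR⟩
      obtain ⟨hR1, hR2, hR3, hR4⟩ := hkR i hi1 hin1
      have hWji : (uhat u ∘ sOneTo n) j < (uhat u ∘ sOneTo n) i := by
        by_cases hj : j = n + 1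
        · rw [hj, w_last]
          omega
        · have hjn : j ≤ n := by omega
          have hWj : (uhat u ∘ sOneTo n) j = u j + 1 := w_eval (by omega) hjn
          rcases hR3 with h0 | h0
          · omega
          · have huji : u j < u i := by rw [hKR]; exact h0
            omega
      have hustrict : ∀ k, i < k → k < j → u i < u k := by
        intro k h1k h2k
        have h4 := hR4 k h1k (by omega)
        have hkn : k ≤ n := by omega
        have hne2 : u k ≠ u i := fun h => by
          have := u_inj hu (by omega) hkn hi1 hin1 h
          omega
        omega
      have hmidW : ∀ k, i < k → k < j → u i + 1 < (uhat u ∘ sOneTo n) k := by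
        intro k h1k h2k
        rw [w_eval (by omega) (show k ≤ n by omega)]
        have := hustrict k h1k h2k
        omega
      have hgev : ∀ p, i ≤ p → p < j → (uhat u ∘ sOneTo n) i ≤ (uhat u ∘ sOneTo n) p := by
        intro p h1p h2p
        rcases Nat.eq_or_lt_of_le h1p with h | h
        · rw [← h]
        · rw [hWi]
          exact le_of_lt (hmidW p h h2p)
      have hmid' : ∀ k, i < k → k < j →
          ((uhat u ∘ sOneTo n) ∘ transp i j) j < ((uhat u ∘ sOneTo n) ∘ transp i j) k := by
        intro k h1k h2k
        show (uhat u ∘ sOneTo n) (transp i j j) < (uhat u ∘ sOneTo n) (transp i j k)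
        rw [transp_right i j (by omega), transp_other (by omega) (by omega), hWi]
        exact hmidW k h1k h2k
      have hwt_id : ∀ a, a ∉ Set.Icc 1 (n + 1) →
          ((uhat u ∘ sOneTo n) ∘ transp i j) a = a := by
        intro a ha
        have ha' := ha
        rw [Set.mem_Icc] at ha'
        push_neg at ha'
        have hai : a ≠ i := by
          intro h
          exact absurd (Set.mem_Icc.mpr ⟨by omega, by omega⟩) (h ▸ ha)
        have haj : a ≠ j := by
          intro h
          exact absurd (Set.mem_Icc.mpr ⟨by omega, by omega⟩) (h ▸ ha)
        show (uhat u ∘ sOneTo n) (transp i j a) = a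
        rw [transp_other hai haj]
        exact w_id_out hu a ha
      have hwtt : ((uhat u ∘ sOneTo n) ∘ transp i j) ∘ transp i j = uhat u ∘ sOneTo n := by
        funext a
        show (uhat u ∘ sOneTo n) (transp i j (transp i j a)) = _
        rw [transp_invol]
      have hLT : bruhatLT (n + 1) ((uhat u ∘ sOneTo n) ∘ transp i j) (uhat u ∘ sOneTo n) := by
        constructor
        · rw [bruhatLE_iff]
          intro p hp1 hp2 c
          rcases Nat.lt_or_ge p i with h | h
          · rw [pref_transp_out (uhat u ∘ sOneTo n) hi hij (Or.inl h)]
          · rcases Nat.lt_or_ge p j with h2 | h2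
            · obtain ⟨M, hM1, hM2⟩ := pref_transp_mid (uhat u ∘ sOneTo n) hi hij h h2
              rw [hM1, hM2, cntF_cons, cntF_cons]
              split_ifs <;> omega
            · rw [pref_transp_out (uhat u ∘ sOneTo n) hi hij (Or.inr h2)]
        · intro hfun
          have h1 : (uhat u ∘ sOneTo n) (transp i j i) = (uhat u ∘ sOneTo n) i :=
            congrFun hfun i
          rw [transp_left] at h1
          omega
      have hcover : bruhatCovBy (n + 1) ((uhat u ∘ sOneTo n) ∘ transp i j)
          (uhat u ∘ sOneTo n) := by
        refine ⟨hLT, ?_⟩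
        rintro z hz ⟨⟨hxz_le, hxz_ne⟩, ⟨hzy_le, hzy_ne⟩⟩
        have hzy' : bruhatLE (n + 1) z
            (((uhat u ∘ sOneTo n) ∘ transp i j) ∘ transp i j) := by
          rw [hwtt]
          exact hzy_le
        rcases cover_lemma hi hij hjm hmid' hwt_id hz.2 hxz_le hzy' with h | h
        · exact hxz_ne h.symm
        · rw [hwtt] at h
          exact hzy_ne h
      have hLEv : bruhatLE (n + 1) (uhat u) ((uhat u ∘ sOneTo n) ∘ transp i j) := by
        rw [bruhatLE_iff]
        intro p hp1 hp2 c
        have hvw := bruhatLE_iff.mp (v_le_w (n := n) (u := u)) p hp1 hp2 c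
        rcases Nat.lt_or_ge p i with h | h
        · rw [pref_transp_out (uhat u ∘ sOneTo n) hi hij (Or.inl h)]
          exact hvw
        · rcases Nat.lt_or_ge p j with h2 | h2
          · obtain ⟨M, hM1, hM2⟩ := pref_transp_mid (uhat u ∘ sOneTo n) hi hij h h2
            have hcv := cnt_vw (u := u) (show 1 ≤ p by omega) (show p ≤ n by omega) c
            rw [hM1, cntF_cons] at hcv
            rw [hM2, cntF_cons]
            have hge := hgev p h h2
            have hW1p : 1 ≤ (uhat u ∘ sOneTo n) p :=
              w_ge1 hu (by omega) (by omega)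
            split_ifs at hcv ⊢ <;> omega
          · rw [pref_transp_out (uhat u ∘ sOneTo n) hi hij (Or.inr h2)]
            exact hvw
      exact ⟨hLEv, hcover⟩
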